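/- arXiv:1605.08416 — 3 statements merged into one kernel-verified Lean document; each statement's English description precedes it below -/
import Mathlib

section
/- Any tri-colored sum-free set in F_2^n has size at most 3 · Σ_{k=0}^{⌊n/3⌋} C(n,k). -/
open Finset Module

abbrev F2 := ZMod 2

-- support of v : Fin m → F2
-- step A: existence of max-support kernel vector with support ≥ finrank ker

lemma exists_big_support {m : ℕ} (W : Submodule F2 (Fin m → F2)) :
    ∃ v ∈ W, finrank F2 W ≤ (univ.filter (fun i => v i ≠ 0)).card := by
  classical
  -- choose v in W maximizing support size
  obtain ⟨v, hvW, hmax⟩ : ∃ v ∈ (univ.filter (· ∈ W)),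
      ∀ w ∈ (univ.filter (· ∈ W)), (univ.filter (fun i => w i ≠ 0)).card ≤ (univ.filter (fun i => v i ≠ 0)).card := by
    apply Finset.exists_max_image
    exact ⟨0, by simp [W.zero_mem]⟩
  simp only [mem_filter, mem_univ, true_and] at hvW
  refine ⟨v, hvW, ?_⟩
  by_contra hlt
  push_neg at hlt
  set Sv := univ.filter (fun i => v i ≠ 0) with hS
  -- restriction map W → (Sv → F2) is not injective
  let ρ : W →ₗ[F2] (Sv → F2) :=
    { toFun := fun w t => (w : Fin m → F2) t,
      map_add' := by intros; rfl,
      map_smul' := by intros; rfl }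
  have hni : ¬ Function.Injective ρ := by
    intro hinj
    have := LinearMap.finrank_le_finrank_of_injective hinj
    rw [Module.finrank_pi F2] at this
    simp only [Fintype.card_coe] at this
    omega
  rw [Function.not_injective_iff] at hni
  obtain ⟨w1, w2, hρ, hne⟩ := hni
  set w : Fin m → F2 := (w1 : Fin m → F2) - w2 with hw
  have hwW : w ∈ W := W.sub_mem w1.2 w2.2
  have hwz : ∀ t ∈ Sv, w t = 0 := by
    intro t ht
    have := congrFun hρ ⟨t, ht⟩
    simpa [ρ, hw, sub_eq_zero] using this
  have hwne : w ≠ 0 := by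
    intro h
    apply hne; apply Subtype.ext
    have : (w1 : Fin m → F2) = w2 := by
      have := sub_eq_zero.mp h; exact this
    exact this
  obtain ⟨t0, ht0⟩ : ∃ t0, w t0 ≠ 0 := by
    by_contra h; push_neg at h; exact hwne (funext h)
  have ht0S : t0 ∉ Sv := fun h => ht0 (hwz t0 h)
  -- v + w has strictly larger support
  have hsub : insert t0 Sv ⊆ univ.filter (fun i => (v + w) i ≠ 0) := by
    intro t ht
    rcases Finset.mem_insert.mp ht with rfl | ht
    · simp only [mem_filter, mem_univ, true_and, Pi.add_apply]
      have hv0 : v t = 0 := by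
        by_contra h; exact ht0S (by simp [hS, h])
      simp [hv0, ht0]
    · simp only [mem_filter, mem_univ, true_and, Pi.add_apply]
      rw [hwz t ht, add_zero]
      simpa [hS] using (Finset.mem_filter.mp ht).2
  have hcard : Sv.card < (univ.filter (fun i => (v + w) i ≠ 0)).card := by
    calc Sv.card < (insert t0 Sv).card := by rw [Finset.card_insert_of_notMem ht0S]; omega
    _ ≤ _ := Finset.card_le_card hsub
  have := hmax (v + w) (by simp [W.add_mem hvW hwW])
  omega

lemma diag_slice_rank {m : ℕ} {ι₁ ι₂ ι₃ : Type} [Fintype ι₁] [Fintype ι₂] [Fintype ι₃]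
    (f₁ : ι₁ → Fin m → F2) (g₁ : ι₁ → Fin m → Fin m → F2)
    (f₂ : ι₂ → Fin m → F2) (g₂ : ι₂ → Fin m → Fin m → F2)
    (f₃ : ι₃ → Fin m → F2) (g₃ : ι₃ → Fin m → Fin m → F2)
    (h : ∀ i j k : Fin m, (if i = j ∧ j = k then (1 : F2) else 0) =
      ∑ α, f₁ α i * g₁ α j k + ∑ β, f₂ β j * g₂ β i k + ∑ γ, f₃ γ k * g₃ γ i j) :
    m ≤ Fintype.card ι₁ + Fintype.card ι₂ + Fintype.card ι₃ := by
  classical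
  let Φ : (Fin m → F2) →ₗ[F2] (ι₁ → F2) :=
    { toFun := fun v α => ∑ i, v i * f₁ α i,
      map_add' := by
        intro x y; funext α
        simp [add_mul, Finset.sum_add_distrib]
      map_smul' := by
        intro r x; funext α
        simp [Finset.mul_sum, mul_assoc] }
  set W := LinearMap.ker Φ with hWdef
  have hrank : m ≤ finrank F2 W + Fintype.card ι₁ := by
    have h1 := LinearMap.finrank_range_add_finrank_ker Φ
    rw [Module.finrank_pi F2, Fintype.card_fin] at h1
    rw [← hWdef] at h1
    have h2 : finrank F2 (LinearMap.range Φ) ≤ Fintype.card ι₁ := by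
      have := Submodule.finrank_le (LinearMap.range Φ)
      rwa [Module.finrank_pi F2] at this
    omega
  obtain ⟨v, hvW, hvs⟩ := exists_big_support W
  set Sv := univ.filter (fun i => v i ≠ 0) with hSv
  suffices hcard : Sv.card ≤ Fintype.card ι₂ + Fintype.card ι₃ by omega
  set G : ι₂ → Fin m → F2 := fun β k => ∑ i, v i * g₂ β i k with hG
  set H : ι₃ → Fin m → F2 := fun γ j => ∑ i, v i * g₃ γ i j with hH
  have hΦv : ∀ α, ∑ i, v i * f₁ α i = 0 := by
    intro α
    have : Φ v = 0 := hvW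
    exact congrFun this α
  have key : ∀ j k : Fin m, (if j = k then v j else 0) =
      ∑ β, f₂ β j * G β k + ∑ γ, H γ j * f₃ γ k := by
    intro j k
    have hsum := congrArg (fun e : Fin m → F2 => ∑ i, v i * e i)
      (funext (fun i => h i j k))
    have lhs : ∑ i, v i * (if i = j ∧ j = k then (1:F2) else 0) = (if j = k then v j else 0) := by
      by_cases hjk : j = k
      · subst hjk; simp [mul_ite]
      · simp [hjk]
    rw [lhs] at hsum
    rw [hsum]
    have e1 : ∀ x : Fin m,
        v x * (∑ α, f₁ α x * g₁ α j k + ∑ β, f₂ β j * g₂ β x k + ∑ γ, f₃ γ k * g₃ γ x j)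
        = (∑ α, (v x * f₁ α x) * g₁ α j k) + (∑ β, f₂ β j * (v x * g₂ β x k))
          + (∑ γ, (v x * g₃ γ x j) * f₃ γ k) := by
      intro x
      simp only [mul_add, Finset.mul_sum]
      congr 1
      · congr 1
        · exact Finset.sum_congr rfl (fun _ _ => by ring)
        · exact Finset.sum_congr rfl (fun _ _ => by ring)
      · exact Finset.sum_congr rfl (fun _ _ => by ring)
    rw [Finset.sum_congr rfl fun x _ => e1 x, Finset.sum_add_distrib, Finset.sum_add_distrib]
    have p1 : ∑ x : Fin m, ∑ α, (v x * f₁ α x) * g₁ α j k = 0 := by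
      rw [Finset.sum_comm]
      refine Finset.sum_eq_zero fun α _ => ?_
      rw [← Finset.sum_mul, hΦv α, zero_mul]
    have p2 : ∑ x : Fin m, ∑ β, f₂ β j * (v x * g₂ β x k) = ∑ β, f₂ β j * G β k := by
      rw [Finset.sum_comm]
      exact Finset.sum_congr rfl fun β _ => by rw [← Finset.mul_sum]
    have p3 : ∑ x : Fin m, ∑ γ, (v x * g₃ γ x j) * f₃ γ k = ∑ γ, H γ j * f₃ γ k := by
      rw [Finset.sum_comm]
      exact Finset.sum_congr rfl fun γ _ => by rw [← Finset.sum_mul]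
    rw [p1, p2, p3, zero_add]
  set wfam : (ι₂ ⊕ ι₃) → (Fin m → F2) := Sum.elim G f₃ with hwfam
  have hmem : ∀ j ∈ Sv, Pi.single j (1:F2) ∈ Submodule.span F2 (Set.range wfam) := by
    intro j hj
    have hvj : v j = 1 := by
      have hne : v j ≠ 0 := by simpa [hSv] using (Finset.mem_filter.mp hj).2
      have : ∀ x : ZMod 2, x ≠ 0 → x = 1 := by decide
      exact this _ hne
    have hrow : Pi.single j (1:F2) = fun k => ∑ β, f₂ β j * G β k + ∑ γ, H γ j * f₃ γ k := by
      funext k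
      rw [← key j k]
      by_cases hjk : j = k
      · subst hjk; simp [hvj]
      · simp [Pi.single_apply, hjk, Ne.symm hjk]
    rw [hrow]
    have hfun : (fun k => ∑ β, f₂ β j * G β k + ∑ γ, H γ j * f₃ γ k)
        = (∑ β, f₂ β j • G β) + (∑ γ, H γ j • f₃ γ) := by
      funext k
      simp [Finset.sum_apply, smul_eq_mul]
    rw [hfun]
    apply Submodule.add_mem
    · exact Submodule.sum_mem _ fun β _ =>
        Submodule.smul_mem _ _ (Submodule.subset_span ⟨Sum.inl β, rfl⟩)
    · exact Submodule.sum_mem _ fun γ _ =>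
        Submodule.smul_mem _ _ (Submodule.subset_span ⟨Sum.inr γ, rfl⟩)
  let u : {j // j ∈ Sv} → (Submodule.span F2 (Set.range wfam)) :=
    fun j => ⟨Pi.single (j : Fin m) 1, hmem j j.2⟩
  have hu : LinearIndependent F2 u := by
    apply LinearIndependent.of_comp (Submodule.span F2 (Set.range wfam)).subtype
    have hsingle : LinearIndependent F2 (fun j : Fin m => Pi.single j (1:F2)) := by
      have := (Pi.basisFun F2 (Fin m)).linearIndependent
      convert this using 1
      funext j
      rw [Pi.basisFun_apply]
    have hc : ((Submodule.span F2 (Set.range wfam)).subtype ∘ u)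
        = (fun j : {j // j ∈ Sv} => Pi.single (j : Fin m) (1:F2)) := rfl
    rw [hc]
    exact hsingle.comp _ Subtype.coe_injective
  have hfd : FiniteDimensional F2 (Submodule.span F2 (Set.range wfam)) :=
    FiniteDimensional.span_of_finite _ (Set.finite_range _)
  have h1 := hu.fintype_card_le_finrank
  have h2 : finrank F2 (Submodule.span F2 (Set.range wfam)) ≤ Fintype.card ι₂ + Fintype.card ι₃ := by
    have h3 := finrank_span_le_card (R := F2) (Set.range wfam)
    refine h3.trans ?_
    rw [Set.toFinset_card]
    have := Fintype.card_range_le wfam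
    simpa [Fintype.card_sum] using this
  have h4 : Fintype.card {j // j ∈ Sv} = Sv.card := Fintype.card_coe _
  omega

def mon {n : ℕ} (S : Finset (Fin n)) (x : Fin n → F2) : F2 := ∏ t ∈ S, x t

def Pf {n : ℕ} (σ : Fin n → Fin 4) (e : Fin 4) : Finset (Fin n) :=
  univ.filter (fun t => σ t = e)

lemma expand {n : ℕ} (x y z : Fin n → F2) :
    (if x + y + z = 0 then (1:F2) else 0)
      = ∑ σ : Fin n → Fin 4, mon (Pf σ 1) x * mon (Pf σ 2) y * mon (Pf σ 3) z := by
  classical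
  have step1 : (if x + y + z = 0 then (1:F2) else 0) = ∏ t, (1 + x t + y t + z t) := by
    have h1 : ∀ t, (1 + x t + y t + z t) = if x t + y t + z t = 0 then (1:F2) else 0 := by
      intro t
      have h2 : ∀ u v w : ZMod 2, (1 + u + v + w) = if u + v + w = 0 then (1:ZMod 2) else 0 := by
        decide
      exact h2 _ _ _
    rw [Finset.prod_congr rfl (fun t _ => h1 t)]
    simp only [Finset.prod_boole]
    by_cases h0 : x + y + z = 0
    · rw [if_pos h0, if_pos (show ∀ i ∈ univ, x i + y i + z i = 0 from fun t _ => congrFun h0 t)]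
    · rw [if_neg h0, if_neg (show ¬ ∀ i ∈ univ, x i + y i + z i = 0 from
        fun hall => h0 (funext fun t => hall t (mem_univ t)))]
  have step2 : ∏ t, (1 + x t + y t + z t) = ∏ t, ∑ e : Fin 4, ![(1:F2), x t, y t, z t] e := by
    refine Finset.prod_congr rfl fun t _ => ?_
    rw [Fin.sum_univ_four]
    simp
  rw [step1, step2, Fintype.prod_sum]
  refine Finset.sum_congr rfl fun σ _ => ?_
  have split : ∏ t, ![(1:F2), x t, y t, z t] (σ t)
      = ∏ e : Fin 4, ∏ t ∈ univ.filter (fun t => σ t = e), ![(1:F2), x t, y t, z t] (σ t) := by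
    rw [Finset.prod_fiberwise_of_maps_to (fun t _ => mem_univ (σ t))]
  rw [split, Fin.prod_univ_four]
  have fib : ∀ e : Fin 4, ∏ t ∈ univ.filter (fun t => σ t = e), ![(1:F2), x t, y t, z t] (σ t)
      = ∏ t ∈ Pf σ e, ![(1:F2), x t, y t, z t] e := by
    intro e
    exact Finset.prod_congr rfl fun t ht => by rw [(Finset.mem_filter.mp ht).2]
  rw [fib 0, fib 1, fib 2, fib 3]
  simp only [Matrix.cons_val_zero, Matrix.cons_val_one, Matrix.head_cons]
  rw [Finset.prod_const_one, one_mul]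
  rfl

lemma card_Pf {n : ℕ} (σ : Fin n → Fin 4) :
    (Pf σ 1).card + (Pf σ 2).card + (Pf σ 3).card ≤ n := by
  classical
  have d12 : Disjoint (Pf σ 1) (Pf σ 2) := by
    rw [Finset.disjoint_left]
    intro t ht1 ht2
    simp only [Pf, mem_filter, mem_univ, true_and] at ht1 ht2
    rw [ht1] at ht2; exact absurd ht2 (by decide)
  have d123 : Disjoint (Pf σ 1 ∪ Pf σ 2) (Pf σ 3) := by
    rw [Finset.disjoint_left]
    intro t ht1 ht3
    simp only [Pf, Finset.mem_union, mem_filter, mem_univ, true_and] at ht1 ht3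
    rcases ht1 with h | h <;> (rw [h] at ht3; exact absurd ht3 (by decide))
  calc (Pf σ 1).card + (Pf σ 2).card + (Pf σ 3).card
      = (Pf σ 1 ∪ Pf σ 2).card + (Pf σ 3).card := by
        rw [Finset.card_union_of_disjoint d12]
    _ = (Pf σ 1 ∪ Pf σ 2 ∪ Pf σ 3).card := by rw [Finset.card_union_of_disjoint d123]
    _ ≤ (univ : Finset (Fin n)).card := Finset.card_le_card (Finset.subset_univ _)
    _ = n := by rw [Finset.card_univ, Fintype.card_fin]

/-- Any tri-colored sum-free set in `𝔽₂ⁿ` has size at most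
`3 * ∑_{k=0}^{⌊n/3⌋} C(n,k)`. -/
theorem stmt2 {n m : ℕ} (a b c : Fin m → (Fin n → ZMod 2))
    (htri : ∀ i j k, a i + b j + c k = 0 ↔ (i = j ∧ j = k)) :
    m ≤ 3 * ∑ k ∈ Finset.range (n / 3 + 1), n.choose k := by
  classical
  set d := n / 3 with hd
  set A : Finset (Finset (Fin n)) := univ.filter (fun S => S.card ≤ d) with hA
  set grp : (Fin n → Fin 4) → Fin 3 := fun σ =>
    if (Pf σ 1).card ≤ d then 0 else if (Pf σ 2).card ≤ d then 1 else 2 with hgrp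
  have hg0 : ∀ σ, grp σ = 0 → (Pf σ 1).card ≤ d := by
    intro σ h
    simp only [hgrp] at h
    split_ifs at h with h1 h2
    · exact h1
    · exact absurd h (by decide)
    · exact absurd h (by decide)
  have hg1 : ∀ σ, grp σ = 1 → (Pf σ 2).card ≤ d := by
    intro σ h
    simp only [hgrp] at h
    split_ifs at h with h1 h2
    · exact absurd h (by decide)
    · exact h2
    · exact absurd h (by decide)
  have hg2 : ∀ σ, grp σ = 2 → (Pf σ 3).card ≤ d := by
    intro σ h
    simp only [hgrp] at h
    split_ifs at h with h1 h2
    · exact absurd h (by decide)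
    · exact absurd h (by decide)
    · have hc := card_Pf σ
      push_neg at h1 h2
      omega
  let f₁ : {S // S ∈ A} → Fin m → F2 := fun S i => mon S.1 (a i)
  let g₁ : {S // S ∈ A} → Fin m → Fin m → F2 := fun S j k =>
    ∑ σ ∈ univ.filter (fun σ => grp σ = 0 ∧ Pf σ 1 = S.1),
      mon (Pf σ 2) (b j) * mon (Pf σ 3) (c k)
  let f₂ : {S // S ∈ A} → Fin m → F2 := fun S j => mon S.1 (b j)
  let g₂ : {S // S ∈ A} → Fin m → Fin m → F2 := fun S i k =>
    ∑ σ ∈ univ.filter (fun σ => grp σ = 1 ∧ Pf σ 2 = S.1),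
      mon (Pf σ 1) (a i) * mon (Pf σ 3) (c k)
  let f₃ : {S // S ∈ A} → Fin m → F2 := fun S k => mon S.1 (c k)
  let g₃ : {S // S ∈ A} → Fin m → Fin m → F2 := fun S i j =>
    ∑ σ ∈ univ.filter (fun σ => grp σ = 2 ∧ Pf σ 3 = S.1),
      mon (Pf σ 1) (a i) * mon (Pf σ 2) (b j)
  have hid : ∀ i j k : Fin m, (if i = j ∧ j = k then (1:F2) else 0) =
      ∑ α, f₁ α i * g₁ α j k + ∑ β, f₂ β j * g₂ β i k + ∑ γ, f₃ γ k * g₃ γ i j := by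
    intro i j k
    have e0 : (if i = j ∧ j = k then (1:F2) else 0)
        = (if a i + b j + c k = 0 then (1:F2) else 0) := by
      by_cases hh : i = j ∧ j = k
      · rw [if_pos hh, if_pos ((htri i j k).mpr hh)]
      · rw [if_neg hh, if_neg (fun h2 => hh ((htri i j k).mp h2))]
    rw [e0, expand (a i) (b j) (c k)]
    rw [← Finset.sum_fiberwise_of_maps_to (t := (univ : Finset (Fin 3)))
      (g := grp) (fun σ _ => mem_univ (grp σ))
      (fun σ => mon (Pf σ 1) (a i) * mon (Pf σ 2) (b j) * mon (Pf σ 3) (c k))]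
    rw [Fin.sum_univ_three]
    have piece0 : ∑ σ ∈ univ.filter (fun σ => grp σ = 0),
        mon (Pf σ 1) (a i) * mon (Pf σ 2) (b j) * mon (Pf σ 3) (c k)
        = ∑ α : {S // S ∈ A}, f₁ α i * g₁ α j k := by
      rw [← Finset.sum_fiberwise_of_maps_to (t := A) (g := fun σ => Pf σ 1)
        (fun σ hσ => by
          simp only [hA, mem_filter, mem_univ, true_and]
          exact hg0 σ (Finset.mem_filter.mp hσ).2)]
      calc ∑ S ∈ A, ∑ σ ∈ (univ.filter (fun σ => grp σ = 0)).filter (fun σ => Pf σ 1 = S),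
            mon (Pf σ 1) (a i) * mon (Pf σ 2) (b j) * mon (Pf σ 3) (c k)
          = ∑ S ∈ A, mon S (a i) *
            ∑ σ ∈ univ.filter (fun σ => grp σ = 0 ∧ Pf σ 1 = S),
              mon (Pf σ 2) (b j) * mon (Pf σ 3) (c k) := by
            refine Finset.sum_congr rfl fun S _ => ?_
            rw [Finset.filter_filter, Finset.mul_sum]
            refine Finset.sum_congr rfl fun σ hσ => ?_
            have := (Finset.mem_filter.mp hσ).2.2
            rw [this, mul_assoc]
        _ = ∑ α : {S // S ∈ A}, f₁ α i * g₁ α j k := (Finset.sum_coe_sort A _).symm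
    have piece1 : ∑ σ ∈ univ.filter (fun σ => grp σ = 1),
        mon (Pf σ 1) (a i) * mon (Pf σ 2) (b j) * mon (Pf σ 3) (c k)
        = ∑ β : {S // S ∈ A}, f₂ β j * g₂ β i k := by
      rw [← Finset.sum_fiberwise_of_maps_to (t := A) (g := fun σ => Pf σ 2)
        (fun σ hσ => by
          simp only [hA, mem_filter, mem_univ, true_and]
          exact hg1 σ (Finset.mem_filter.mp hσ).2)]
      calc ∑ S ∈ A, ∑ σ ∈ (univ.filter (fun σ => grp σ = 1)).filter (fun σ => Pf σ 2 = S),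
            mon (Pf σ 1) (a i) * mon (Pf σ 2) (b j) * mon (Pf σ 3) (c k)
          = ∑ S ∈ A, mon S (b j) *
            ∑ σ ∈ univ.filter (fun σ => grp σ = 1 ∧ Pf σ 2 = S),
              mon (Pf σ 1) (a i) * mon (Pf σ 3) (c k) := by
            refine Finset.sum_congr rfl fun S _ => ?_
            rw [Finset.filter_filter, Finset.mul_sum]
            refine Finset.sum_congr rfl fun σ hσ => ?_
            have := (Finset.mem_filter.mp hσ).2.2
            rw [← this]; ring
        _ = ∑ β : {S // S ∈ A}, f₂ β j * g₂ β i k := (Finset.sum_coe_sort A _).symm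
    have piece2 : ∑ σ ∈ univ.filter (fun σ => grp σ = 2),
        mon (Pf σ 1) (a i) * mon (Pf σ 2) (b j) * mon (Pf σ 3) (c k)
        = ∑ γ : {S // S ∈ A}, f₃ γ k * g₃ γ i j := by
      rw [← Finset.sum_fiberwise_of_maps_to (t := A) (g := fun σ => Pf σ 3)
        (fun σ hσ => by
          simp only [hA, mem_filter, mem_univ, true_and]
          exact hg2 σ (Finset.mem_filter.mp hσ).2)]
      calc ∑ S ∈ A, ∑ σ ∈ (univ.filter (fun σ => grp σ = 2)).filter (fun σ => Pf σ 3 = S),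
            mon (Pf σ 1) (a i) * mon (Pf σ 2) (b j) * mon (Pf σ 3) (c k)
          = ∑ S ∈ A, mon S (c k) *
            ∑ σ ∈ univ.filter (fun σ => grp σ = 2 ∧ Pf σ 3 = S),
              mon (Pf σ 1) (a i) * mon (Pf σ 2) (b j) := by
            refine Finset.sum_congr rfl fun S _ => ?_
            rw [Finset.filter_filter, Finset.mul_sum]
            refine Finset.sum_congr rfl fun σ hσ => ?_
            have := (Finset.mem_filter.mp hσ).2.2
            rw [← this]; ring
        _ = ∑ γ : {S // S ∈ A}, f₃ γ k * g₃ γ i j := (Finset.sum_coe_sort A _).symm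
    rw [piece0, piece1, piece2]
  have hbound := diag_slice_rank f₁ g₁ f₂ g₂ f₃ g₃ hid
  have hcardA : Fintype.card {S // S ∈ A} = ∑ k ∈ Finset.range (d+1), n.choose k := by
    rw [Fintype.card_coe]
    rw [Finset.card_eq_sum_card_fiberwise (f := Finset.card) (t := Finset.range (d+1))
      (fun S hS => by
        simp only [Finset.mem_coe, hA, mem_filter, mem_univ, true_and] at hS
        simp only [Finset.mem_coe, Finset.mem_range]; omega)]
    refine Finset.sum_congr rfl fun k hk => ?_
    have hk' : k ≤ d := by simpa [Nat.lt_succ_iff] using Finset.mem_range.mp hk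
    have h1 : A.filter (fun S => S.card = k) = univ.filter (fun S : Finset (Fin n) => S.card = k) := by
      rw [hA, Finset.filter_filter]
      refine Finset.filter_congr fun S _ => ?_
      constructor
      · exact fun h => h.2
      · exact fun h => ⟨by omega, h⟩
    rw [h1]
    rw [← Finset.powerset_univ, ← Finset.powersetCard_eq_filter,
      Finset.card_powersetCard, Finset.card_univ, Fintype.card_fin]
  rw [hcardA] at hbound
  omega
end

section
/- Any tri-colored sum-free set in F_2^n has size at most 6 · C(n, ⌊n/3⌋). -/
open Finset Matrix


lemma exists_mem_support_card {F : Type} [Field F] [DecidableEq F] {m : ℕ}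
    (V : Submodule F (Fin m → F)) :
    ∃ v ∈ V, Module.finrank F V ≤ Fintype.card {i // v i ≠ 0} := by
  classical
  obtain hd | hd := Nat.eq_zero_or_pos (Module.finrank F V)
  · exact ⟨0, V.zero_mem, by omega⟩
  let d := Module.finrank F V
  have hdpos : 0 < d := hd
  let bV : Module.Basis (Fin d) F V := Module.finBasis F V
  let M : Matrix (Fin d) (Fin m) F := Matrix.of fun i j => (bV i : Fin m → F) j
  have hMli : LinearIndependent F M := by
    have h := bV.linearIndependent.map' V.subtype V.ker_subtype
    exact h
  have hMrank : M.rank = d := by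
    rw [hMli.rank_matrix, Fintype.card_fin]
  have hcols : Module.finrank F (Submodule.span F (Set.range Mᵀ)) = d := by
    rw [show Set.range Mᵀ = Set.range M.col from rfl, ← Matrix.rank_eq_finrank_span_cols, hMrank]
  obtain ⟨s, hsub, hspan, hli⟩ := exists_linearIndependent F (Set.range Mᵀ)
  haveI : Fintype s := hli.setFinite.fintype
  have hcards : s.toFinset.card = d := by
    rw [← finrank_span_set_eq_card hli, hspan, hcols]
  have hcard : Fintype.card s = d := by rw [← Set.toFinset_card, hcards]
  haveI : Nonempty s := by
    rw [← Fintype.card_pos_iff, hcard]; exact hd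
  have hfr : Fintype.card s = Module.finrank F (Fin d → F) := by
    rw [hcard, Module.finrank_pi, Fintype.card_fin]
  let B2 : Module.Basis s F (Fin d → F) := basisOfLinearIndependentOfCardEqFinrank hli hfr
  let φ : (Fin d → F) →ₗ[F] F := Module.Basis.constr B2 F fun _ => (1:F)
  have hφ : ∀ u : s, φ (u : Fin d → F) = 1 := by
    intro u
    have h1 : B2 u = (u : Fin d → F) := by
      rw [show ⇑B2 = ((↑) : s → (Fin d → F)) from
        coe_basisOfLinearIndependentOfCardEqFinrank hli hfr]
    rw [← h1]
    exact Module.Basis.constr_basis B2 F (fun _ => (1:F)) u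
  have hφx : ∀ y : Fin d → F, φ y = ∑ i, y i * φ (Pi.single i 1) := by
    intro y
    conv_lhs => rw [show y = ∑ i, Pi.single i (y i) from (Finset.univ_sum_single y).symm]
    rw [map_sum]
    refine Finset.sum_congr rfl fun i _ => ?_
    have h2 : Pi.single i (y i) = y i • (Pi.single i (1:F) : Fin d → F) := by
      funext j
      simp [Pi.single_apply, mul_ite]
    rw [h2, _root_.map_smul, smul_eq_mul]
  choose e he using fun u : s => hsub u.2
  have einj : Function.Injective e := by
    intro u u' huu
    apply Subtype.ext
    rw [← he u, ← he u', huu]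
  let x : Fin d → F := fun i => φ (Pi.single i 1)
  refine ⟨(↑(∑ i, x i • bV i) : Fin m → F), (∑ i, x i • bV i).2, ?_⟩
  have hv : ∀ u : s, (↑(∑ i, x i • bV i) : Fin m → F) (e u) = 1 := by
    intro u
    have h3 : (↑(∑ i, x i • bV i) : Fin m → F) (e u) = ∑ i, x i * (bV i : Fin m → F) (e u) := by
      simp [AddSubmonoidClass.coe_finset_sum]
    rw [h3]
    have h4 : ∀ i, (bV i : Fin m → F) (e u) = (u : Fin d → F) i := by
      intro i
      have := congrFun (he u) i
      exact this
    calc ∑ i, x i * (bV i : Fin m → F) (e u) = ∑ i, (u : Fin d → F) i * x i := by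
          refine Finset.sum_congr rfl fun i _ => ?_
          rw [h4 i, mul_comm]
      _ = φ (u : Fin d → F) := (hφx _).symm
      _ = 1 := hφ u
  calc Module.finrank F V = Fintype.card s := hcard.symm
    _ ≤ _ := Fintype.card_le_of_injective
        (fun u => ⟨e u, by rw [hv u]; exact one_ne_zero⟩)
        (fun u u' huu => einj (congrArg Subtype.val huu))


lemma slice_rank_diag {F : Type} [Field F] [DecidableEq F] {m : ℕ} {ι : Type} [DecidableEq ι]
    (A B C : Finset ι)
    (f : ι → Fin m → F) (g : ι → Fin m → Fin m → F)
    (f' : ι → Fin m → F) (g' : ι → Fin m → Fin m → F)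
    (f'' : ι → Fin m → F) (g'' : ι → Fin m → Fin m → F)
    (hd : ∀ i j k : Fin m,
      (∑ α ∈ A, f α i * g α j k) + (∑ β ∈ B, f' β j * g' β i k)
        + (∑ γ ∈ C, f'' γ k * g'' γ i j) = if i = j ∧ j = k then 1 else 0) :
    m ≤ A.card + B.card + C.card := by
  classical
  let N : Matrix {x // x ∈ C} (Fin m) F := Matrix.of fun γ k => f'' γ.1 k
  have hrank : N.rank + Module.finrank F (LinearMap.ker N.mulVecLin) = m := by
    have h := LinearMap.finrank_range_add_finrank_ker N.mulVecLin
    rw [Module.finrank_pi, Fintype.card_fin] at h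
    exact h
  obtain ⟨h, hker, hsupp⟩ := exists_mem_support_card (LinearMap.ker N.mulVecLin)
  have hC : ∀ γ (hγ : γ ∈ C), ∑ k, f'' γ k * h k = 0 := by
    intro γ hγ
    have h0 := congrFun (LinearMap.mem_ker.mp hker) ⟨γ, hγ⟩
    simpa [N, Matrix.mulVecLin_apply, Matrix.mulVec, dotProduct] using h0
  let M1 : Matrix (Fin m) ({x // x ∈ A} ⊕ {x // x ∈ B}) F :=
    Matrix.of fun i s => Sum.elim (fun α => f α.1 i) (fun β => ∑ k, g' β.1 i k * h k) s
  let M2 : Matrix ({x // x ∈ A} ⊕ {x // x ∈ B}) (Fin m) F :=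
    Matrix.of fun s j => Sum.elim (fun α => ∑ k, g α.1 j k * h k) (fun β => f' β.1 j) s
  have hD : Matrix.diagonal h = M1 * M2 := by
    ext i j
    rw [Matrix.mul_apply]
    have lhs : Matrix.diagonal h i j = ∑ k, (if i = j ∧ j = k then 1 else 0) * h k := by
      by_cases hij : i = j
      · subst hij
        rw [Matrix.diagonal_apply_eq]
        rw [Finset.sum_eq_single i]
        · simp
        · intro k _ hk; simp [Ne.symm hk]
        · simp
      · rw [Matrix.diagonal_apply_ne _ hij]
        simp [hij]
    rw [lhs]
    have expand : ∀ k, (if i = j ∧ j = k then (1:F) else 0) * h k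
        = (∑ α ∈ A, f α i * (g α j k * h k)) + (∑ β ∈ B, f' β j * (g' β i k * h k))
          + (∑ γ ∈ C, (f'' γ k * h k) * g'' γ i j) := by
      intro k
      rw [← hd i j k]
      rw [add_mul, add_mul, Finset.sum_mul, Finset.sum_mul, Finset.sum_mul]
      congr 1
      · congr 1
        · exact Finset.sum_congr rfl fun α _ => by ring
        · exact Finset.sum_congr rfl fun β _ => by ring
      · exact Finset.sum_congr rfl fun γ _ => by ring
    simp_rw [expand]
    rw [Finset.sum_add_distrib, Finset.sum_add_distrib]
    rw [Finset.sum_comm (s := univ) (t := A), Finset.sum_comm (s := univ) (t := B),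
      Finset.sum_comm (s := univ) (t := C)]
    have hC0 : ∑ γ ∈ C, ∑ k, (f'' γ k * h k) * g'' γ i j = 0 := by
      refine Finset.sum_eq_zero fun γ hγ => ?_
      rw [← Finset.sum_mul, hC γ hγ, zero_mul]
    rw [hC0, add_zero]
    rw [Fintype.sum_sum_type]
    have eA : ∑ a₁ : { x // x ∈ A }, M1 i (Sum.inl a₁) * M2 (Sum.inl a₁) j
        = ∑ α ∈ A, ∑ k, f α i * (g α j k * h k) := by
      rw [← Finset.sum_coe_sort A (fun α => ∑ k, f α i * (g α j k * h k))]
      refine Finset.sum_congr rfl fun α _ => ?_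
      simp only [M1, M2, Matrix.of_apply, Sum.elim_inl]
      rw [Finset.mul_sum]
    have eB : ∑ a₂ : { x // x ∈ B }, M1 i (Sum.inr a₂) * M2 (Sum.inr a₂) j
        = ∑ β ∈ B, ∑ k, f' β j * (g' β i k * h k) := by
      rw [← Finset.sum_coe_sort B (fun β => ∑ k, f' β j * (g' β i k * h k))]
      refine Finset.sum_congr rfl fun β _ => ?_
      simp only [M1, M2, Matrix.of_apply, Sum.elim_inr]
      rw [Finset.sum_mul]
      exact Finset.sum_congr rfl fun k _ => by ring

    rw [eA, eB]
  have h1 : (Matrix.diagonal h).rank ≤ A.card + B.card := by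
    rw [hD]
    refine (Matrix.rank_mul_le_left M1 M2).trans ?_
    refine (Matrix.rank_le_card_width M1).trans ?_
    rw [Fintype.card_sum, Fintype.card_coe, Fintype.card_coe]
  have h2 : (Matrix.diagonal h).rank = Fintype.card {i // h i ≠ 0} :=
    Matrix.rank_diagonal h
  have h3 : N.rank ≤ C.card := by
    refine (Matrix.rank_le_card_height N).trans ?_
    rw [Fintype.card_coe]
  omega

namespace CLP

variable {n : ℕ}

/-- which factor is selected in each coordinate: 0 ↦ 1, 1 ↦ x, 2 ↦ y, 3 ↦ z -/
def pick (x y z : Fin n → ZMod 2) : Fin 4 → Fin n → ZMod 2 := ![fun _ => 1, x, y, z]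

def fib (φ : Fin n → Fin 4) (j : Fin 4) : Finset (Fin n) := univ.filter fun t => φ t = j

lemma indicator_prod (s : Fin n → ZMod 2) :
    ∏ t, (1 + s t) = if s = 0 then 1 else 0 := by
  by_cases h : s = 0
  · subst h; simp
  · rw [if_neg h]
    obtain ⟨t, ht⟩ := Function.ne_iff.mp h
    refine Finset.prod_eq_zero (Finset.mem_univ t) ?_
    have : ∀ u : ZMod 2, u ≠ 0 → 1 + u = 0 := by decide
    exact this _ ht

lemma prod_one_add (x y z : Fin n → ZMod 2) :
    ∏ t, (1 + x t + y t + z t) = ∑ φ : Fin n → Fin 4, ∏ t, pick x y z (φ t) t := by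
  have h : ∀ t, (1 + x t + y t + z t) = ∑ j : Fin 4, pick x y z j t := by
    intro t
    rw [Fin.sum_univ_four]
    simp [pick]
  simp_rw [h]
  rw [Finset.prod_univ_sum]
  rw [Fintype.piFinset_univ]

lemma prod_pick (x y z : Fin n → ZMod 2) (φ : Fin n → Fin 4) :
    ∏ t, pick x y z (φ t) t =
      (∏ t ∈ fib φ 1, x t) * ((∏ t ∈ fib φ 2, y t) * (∏ t ∈ fib φ 3, z t)) := by
  have h : ∏ t, pick x y z (φ t) t
      = ∏ j : Fin 4, ∏ t ∈ univ.filter fun t => φ t = j, pick x y z (φ t) t :=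
    (Finset.prod_fiberwise_of_maps_to (fun t _ => Finset.mem_univ (φ t)) _).symm
  rw [h, Fin.prod_univ_four]
  have e0 : ∏ t ∈ univ.filter fun t => φ t = 0, pick x y z (φ t) t = 1 := by
    refine Finset.prod_eq_one fun t ht => ?_
    rw [(Finset.mem_filter.mp ht).2]; rfl
  have e1 : ∏ t ∈ univ.filter fun t => φ t = 1, pick x y z (φ t) t = ∏ t ∈ fib φ 1, x t := by
    refine Finset.prod_congr rfl fun t ht => ?_
    rw [(Finset.mem_filter.mp ht).2]; rfl
  have e2 : ∏ t ∈ univ.filter fun t => φ t = 2, pick x y z (φ t) t = ∏ t ∈ fib φ 2, y t := by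
    refine Finset.prod_congr rfl fun t ht => ?_
    rw [(Finset.mem_filter.mp ht).2]; rfl
  have e3 : ∏ t ∈ univ.filter fun t => φ t = 3, pick x y z (φ t) t = ∏ t ∈ fib φ 3, z t := by
    refine Finset.prod_congr rfl fun t ht => ?_
    rw [(Finset.mem_filter.mp ht).2]; rfl
  rw [e0, e1, e2, e3]
  ring

lemma fib_card_sum (φ : Fin n → Fin 4) :
    (fib φ 0).card + (fib φ 1).card + ((fib φ 2).card + (fib φ 3).card) = n := by
  have h := Finset.card_eq_sum_card_fiberwise
    (f := φ) (s := univ) (t := univ) (fun t _ => Finset.mem_univ (φ t))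
  rw [Fin.sum_univ_four] at h
  simp only [Finset.card_univ, Fintype.card_fin] at h
  simp only [fib]
  omega

/-- the selector predicates -/
def selA (φ : Fin n → Fin 4) : Prop := (fib φ 1).card ≤ (fib φ 2).card ∧ (fib φ 1).card ≤ (fib φ 3).card

instance : DecidablePred (selA (n := n)) := fun _ => instDecidableAnd

lemma bound_of_min {d1 d2 d3 : ℕ} (hsum : d1 + d2 + d3 ≤ n) (h2 : d1 ≤ d2) (h3 : d1 ≤ d3) :
    d1 ≤ n / 3 := by
  rw [Nat.le_div_iff_mul_le (by norm_num)]
  omega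

lemma selA_bound (φ : Fin n → Fin 4) (h : selA φ) : (fib φ 1).card ≤ n / 3 := by
  have hs := fib_card_sum φ
  exact bound_of_min (by omega) h.1 h.2

lemma selB_bound (φ : Fin n → Fin 4) (h : ¬ selA φ) (h' : (fib φ 2).card ≤ (fib φ 3).card) :
    (fib φ 2).card ≤ n / 3 := by
  have hs := fib_card_sum φ
  simp only [selA, not_and_or, not_le] at h
  exact bound_of_min (n := n) (d2 := (fib φ 1).card) (d3 := (fib φ 3).card)
    (by omega) (by omega) (by omega)

lemma selC_bound (φ : Fin n → Fin 4) (h : ¬ selA φ) (h' : ¬ (fib φ 2).card ≤ (fib φ 3).card) :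
    (fib φ 3).card ≤ n / 3 := by
  have hs := fib_card_sum φ
  simp only [selA, not_and_or, not_le] at h
  rw [not_le] at h'
  exact bound_of_min (n := n) (d2 := (fib φ 1).card) (d3 := (fib φ 2).card)
    (by omega) (by omega) (by omega)

end CLP

lemma card_filter_card_le (n k : ℕ) :
    (univ.filter fun S : Finset (Fin n) => S.card ≤ k).card
      = ∑ d ∈ range (k+1), n.choose d := by
  classical
  rw [Finset.card_eq_sum_card_fiberwise (f := Finset.card)
    (t := range (k+1)) (fun S hS => by
      rw [Finset.mem_coe, Finset.mem_range]
      have := (Finset.mem_filter.mp (Finset.mem_coe.mp hS)).2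
      omega)]
  refine Finset.sum_congr rfl fun d hd => ?_
  rw [Finset.mem_range] at hd
  have h1 : (univ.filter fun S : Finset (Fin n) => S.card ≤ k).filter (fun S => S.card = d)
      = univ.filter fun S : Finset (Fin n) => S.card = d := by
    rw [Finset.filter_filter]
    refine Finset.filter_congr fun S _ => ?_
    constructor
    · exact fun h => h.2
    · exact fun h => ⟨by omega, h⟩
  rw [h1]
  have h2 : (univ.filter fun S : Finset (Fin n) => S.card = d)
      = Finset.powersetCard d (univ : Finset (Fin n)) := by
    rw [Finset.powersetCard_eq_filter, Finset.powerset_univ]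
  rw [h2, Finset.card_powersetCard, Finset.card_univ, Fintype.card_fin]

lemma sum_choose_le (n k : ℕ) (hk : 3 * k ≤ n) :
    ∑ d ∈ range (k+1), n.choose d ≤ 2 * n.choose k := by
  induction k with
  | zero => simp
  | succ k ih =>
    rw [Finset.sum_range_succ]
    have h2 : 2 * n.choose k ≤ n.choose (k+1) := by
      have h := Nat.choose_succ_right_eq n k
      have hnk : 2 * (k + 1) ≤ n - k := by omega
      have h3 : 2 * n.choose k * (k+1) ≤ n.choose (k+1) * (k+1) := by
        rw [h]
        calc 2 * n.choose k * (k+1) = n.choose k * (2 * (k+1)) := by ring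
          _ ≤ n.choose k * (n - k) := Nat.mul_le_mul_left _ hnk
      exact Nat.le_of_mul_le_mul_right h3 (Nat.succ_pos k)
    have := ih (by omega)
    omega

open CLP in
/-- Any tri-colored sum-free set in `𝔽₂ⁿ` has size at most `6 * C(n, ⌊n/3⌋)`. -/
theorem stmt3 {n m : ℕ} (a b c : Fin m → (Fin n → ZMod 2))
    (htri : ∀ i j k, a i + b j + c k = 0 ↔ (i = j ∧ j = k)) :
    m ≤ 6 * n.choose (n / 3) := by
  classical
  set 𝒮 : Finset (Finset (Fin n)) := univ.filter fun S => S.card ≤ n / 3 with h𝒮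
  set Q : (Fin n → Fin 4) → Prop := fun φ => (fib φ 2).card ≤ (fib φ 3).card with hQ
  let fA : Finset (Fin n) → Fin m → ZMod 2 := fun S i => ∏ t ∈ S, a i t
  let gA : Finset (Fin n) → Fin m → Fin m → ZMod 2 := fun S j k =>
    ∑ φ ∈ univ.filter (fun φ : Fin n → Fin 4 => selA φ ∧ fib φ 1 = S),
      (∏ t ∈ fib φ 2, b j t) * (∏ t ∈ fib φ 3, c k t)
  let fB : Finset (Fin n) → Fin m → ZMod 2 := fun S j => ∏ t ∈ S, b j t
  let gB : Finset (Fin n) → Fin m → Fin m → ZMod 2 := fun S i k =>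
    ∑ φ ∈ univ.filter (fun φ : Fin n → Fin 4 => (¬ selA φ ∧ Q φ) ∧ fib φ 2 = S),
      (∏ t ∈ fib φ 1, a i t) * (∏ t ∈ fib φ 3, c k t)
  let fC : Finset (Fin n) → Fin m → ZMod 2 := fun S k => ∏ t ∈ S, c k t
  let gC : Finset (Fin n) → Fin m → Fin m → ZMod 2 := fun S i j =>
    ∑ φ ∈ univ.filter (fun φ : Fin n → Fin 4 => (¬ selA φ ∧ ¬ Q φ) ∧ fib φ 3 = S),
      (∏ t ∈ fib φ 1, a i t) * (∏ t ∈ fib φ 2, b j t)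
  have key : ∀ i j k : Fin m,
      (∑ S ∈ 𝒮, fA S i * gA S j k) + (∑ S ∈ 𝒮, fB S j * gB S i k)
        + (∑ S ∈ 𝒮, fC S k * gC S i j) = if i = j ∧ j = k then 1 else 0 := by
    intro i j k
    have h1 : (if i = j ∧ j = k then (1 : ZMod 2) else 0)
        = ∏ t, (1 + a i t + b j t + c k t) := by
      calc (if i = j ∧ j = k then (1 : ZMod 2) else 0)
          = (if a i + b j + c k = 0 then (1 : ZMod 2) else 0) :=
            if_congr (htri i j k).symm rfl rfl
        _ = ∏ t, (1 + (a i + b j + c k) t) := (indicator_prod _).symm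
        _ = ∏ t, (1 + a i t + b j t + c k t) := by
            refine Finset.prod_congr rfl fun t _ => ?_
            simp [add_assoc]
    rw [h1, prod_one_add]
    simp_rw [prod_pick]
    set W : (Fin n → Fin 4) → ZMod 2 := fun φ =>
      (∏ t ∈ fib φ 1, a i t) * ((∏ t ∈ fib φ 2, b j t) * (∏ t ∈ fib φ 3, c k t)) with hW
    have hsplit : ∑ φ : Fin n → Fin 4, W φ
        = (∑ φ ∈ univ.filter (fun φ => selA φ), W φ)
          + ((∑ φ ∈ univ.filter (fun φ => ¬ selA φ ∧ Q φ), W φ)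
            + (∑ φ ∈ univ.filter (fun φ => ¬ selA φ ∧ ¬ Q φ), W φ)) := by
      rw [← Finset.sum_filter_add_sum_filter_not univ (fun φ => selA φ) W]
      congr 1
      rw [← Finset.sum_filter_add_sum_filter_not (univ.filter fun φ => ¬ selA φ)
        (fun φ => Q φ) W, Finset.filter_filter, Finset.filter_filter]
    rw [hsplit]
    have hA : ∑ φ ∈ univ.filter (fun φ => selA φ), W φ = ∑ S ∈ 𝒮, fA S i * gA S j k := by
      rw [← Finset.sum_fiberwise_of_maps_to (g := fun φ => fib φ 1) (t := 𝒮)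
        (fun φ hφ => Finset.mem_filter.mpr
          ⟨Finset.mem_univ _, selA_bound φ (Finset.mem_filter.mp hφ).2⟩) W]
      refine Finset.sum_congr rfl fun S hS => ?_
      rw [Finset.filter_filter]
      have : ∀ φ ∈ univ.filter (fun φ => selA φ ∧ fib φ 1 = S),
          W φ = fA S i * ((∏ t ∈ fib φ 2, b j t) * (∏ t ∈ fib φ 3, c k t)) := by
        intro φ hφ
        rw [hW]
        simp only
        rw [(Finset.mem_filter.mp hφ).2.2]
      rw [Finset.sum_congr rfl this, ← Finset.mul_sum]
    have hB : ∑ φ ∈ univ.filter (fun φ => ¬ selA φ ∧ Q φ), W φ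
        = ∑ S ∈ 𝒮, fB S j * gB S i k := by
      rw [← Finset.sum_fiberwise_of_maps_to (g := fun φ => fib φ 2) (t := 𝒮)
        (fun φ hφ => Finset.mem_filter.mpr
          ⟨Finset.mem_univ _, selB_bound φ (Finset.mem_filter.mp hφ).2.1
            (Finset.mem_filter.mp hφ).2.2⟩) W]
      refine Finset.sum_congr rfl fun S hS => ?_
      rw [Finset.filter_filter]
      have : ∀ φ ∈ univ.filter (fun φ => (¬ selA φ ∧ Q φ) ∧ fib φ 2 = S),
          W φ = fB S j * ((∏ t ∈ fib φ 1, a i t) * (∏ t ∈ fib φ 3, c k t)) := by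
        intro φ hφ
        rw [hW]
        simp only
        rw [← (Finset.mem_filter.mp hφ).2.2]
        ring
      rw [Finset.sum_congr rfl this, ← Finset.mul_sum]
    have hC : ∑ φ ∈ univ.filter (fun φ => ¬ selA φ ∧ ¬ Q φ), W φ
        = ∑ S ∈ 𝒮, fC S k * gC S i j := by
      rw [← Finset.sum_fiberwise_of_maps_to (g := fun φ => fib φ 3) (t := 𝒮)
        (fun φ hφ => Finset.mem_filter.mpr
          ⟨Finset.mem_univ _, selC_bound φ (Finset.mem_filter.mp hφ).2.1
            (Finset.mem_filter.mp hφ).2.2⟩) W]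
      refine Finset.sum_congr rfl fun S hS => ?_
      rw [Finset.filter_filter]
      have : ∀ φ ∈ univ.filter (fun φ => (¬ selA φ ∧ ¬ Q φ) ∧ fib φ 3 = S),
          W φ = fC S k * ((∏ t ∈ fib φ 1, a i t) * (∏ t ∈ fib φ 2, b j t)) := by
        intro φ hφ
        rw [hW]
        simp only
        rw [← (Finset.mem_filter.mp hφ).2.2]
        ring
      rw [Finset.sum_congr rfl this, ← Finset.mul_sum]
    rw [hA, hB, hC]
    ring
  have hm := slice_rank_diag 𝒮 𝒮 𝒮 fA gA fB gB fC gC key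
  have hcard : 𝒮.card = ∑ d ∈ range (n / 3 + 1), n.choose d := card_filter_card_le n (n / 3)
  have hle : ∑ d ∈ range (n / 3 + 1), n.choose d ≤ 2 * n.choose (n / 3) :=
    sum_choose_le n (n / 3) (by
      have := Nat.div_mul_le_self n 3
      omega)
  omega
end

section
/- For every n ≥ 1, Σ_{k=0}^{⌊n/3⌋} C(n,k) < 2 · C(n, ⌊n/3⌋). -/
lemma aux_double (n j : ℕ) (h : j + 1 ≤ n / 3) :
    2 * n.choose j ≤ n.choose (j + 1) := by
  have h3 : (j + 1) * 3 ≤ n := (Nat.le_div_iff_mul_le (by norm_num)).mp h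
  have hkey : n.choose (j + 1) * (j + 1) = n.choose j * (n - j) :=
    Nat.choose_succ_right_eq n j
  have h2 : 2 * (j + 1) ≤ n - j := by omega
  have : 2 * n.choose j * (j + 1) ≤ n.choose (j + 1) * (j + 1) := by
    calc 2 * n.choose j * (j + 1) = n.choose j * (2 * (j + 1)) := by ring
    _ ≤ n.choose j * (n - j) := Nat.mul_le_mul_left _ h2
    _ = n.choose (j + 1) * (j + 1) := hkey.symm
  exact Nat.le_of_mul_le_mul_right this (by omega)

lemma aux_sum (n : ℕ) : ∀ j, j ≤ n / 3 →
    ∑ k ∈ Finset.range (j + 1), n.choose k + 1 ≤ 2 * n.choose j := by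
  intro j
  induction j with
  | zero => intro _; simp
  | succ m ih =>
    intro hj
    have hm : m ≤ n / 3 := by omega
    have := ih hm
    rw [Finset.sum_range_succ]
    have hd := aux_double n m hj
    omega

/-- For every `n ≥ 1`, `∑_{k=0}^{⌊n/3⌋} C(n,k) < 2 * C(n, ⌊n/3⌋)`. -/
theorem stmt4 (n : ℕ) (hn : 1 ≤ n) :
    ∑ k ∈ Finset.range (n / 3 + 1), n.choose k < 2 * n.choose (n / 3) := by
  have := aux_sum n (n / 3) le_rfl
  omega
end
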